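/- arXiv:1309.6910 — 9 statements merged into one kernel-verified Lean document; each statement's English description precedes it below -/
import Mathlib

section
/- The polynomial T_n(x, y) depends only on the sum x + y: for every natural number n and all complex numbers x, y, x', y' with x + y = x' + y', one has T_n(x, y) = T_n(x', y'). -/
open Finset


/-- The two-variable polynomial
`T n x y = ∑_{m=0}^{n} C(n,m) (m+x)^m (n-m+y)^(n-m)` (with `0^0 = 1`). -/
noncomputable def T (n : ℕ) (x y : ℂ) : ℂ :=
  ∑ m ∈ Finset.range (n + 1),
    (n.choose m : ℂ) * ((m : ℂ) + x) ^ m * (((n - m : ℕ) : ℂ) + y) ^ (n - m)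

lemma T_hasDerivAt (n : ℕ) (x y t : ℂ) :
    HasDerivAt (fun u => T (n+1) (x+u) (y-u))
      ((n+1) * T n (x+t+1) (y-t) - (n+1) * T n (x+t) (y-t+1)) t := by
  have H : HasDerivAt (fun u => T (n+1) (x+u) (y-u))
      (∑ m ∈ Finset.range (n+2),
        ((((n+1).choose m : ℂ) * ((m : ℂ) * ((m:ℂ) + (x+t)) ^ (m-1) * 1)) *
            (((n+1-m : ℕ) : ℂ) + (y - t)) ^ (n+1-m)
          + (((n+1).choose m : ℂ) * ((m:ℂ) + (x+t)) ^ m) *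
            (((n+1-m : ℕ) : ℂ) * (((n+1-m : ℕ) : ℂ) + (y - t)) ^ (n+1-m-1) * (-1)))) t := by
    simp only [T]
    apply HasDerivAt.fun_sum
    intro m _
    have h1 : HasDerivAt (fun u : ℂ => (m:ℂ) + (x + u)) 1 t :=
      ((hasDerivAt_id t).const_add x).const_add (m:ℂ)
    have h2 : HasDerivAt (fun u : ℂ => (((n+1-m : ℕ) : ℂ) + (y - u))) (-1) t :=
      ((hasDerivAt_id t).const_sub y).const_add ((n+1-m : ℕ) : ℂ)
    exact ((h1.pow m).const_mul _).mul (h2.pow (n+1-m))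
  convert H using 1
  rw [Finset.sum_add_distrib]
  have hS1 : (∑ m ∈ Finset.range (n+2),
      ((((n+1).choose m : ℂ) * ((m : ℂ) * ((m:ℂ) + (x+t)) ^ (m-1) * 1)) *
        (((n+1-m : ℕ) : ℂ) + (y - t)) ^ (n+1-m)))
      = (n+1) * T n (x+t+1) (y-t) := by
    rw [Finset.sum_range_succ']
    simp only [Nat.cast_zero, zero_mul, mul_zero, zero_mul, add_zero, mul_one]
    rw [T, Finset.mul_sum]
    apply Finset.sum_congr rfl
    intro m hm
    have hc : ((n+1).choose (m+1) : ℂ) * ((m:ℂ)+1) = ((n:ℂ)+1) * (n.choose m : ℂ) := by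
      have h2 : ((n+1) * n.choose m : ℕ) = ((n+1).choose (m+1) * (m+1) : ℕ) :=
        Nat.add_one_mul_choose_eq n m
      exact_mod_cast h2.symm
    have he : n + 1 - (m + 1) = n - m := by omega
    have hb : ((m+1 : ℕ):ℂ) + (x+t) = (m:ℂ) + (x+t+1) := by push_cast; ring
    rw [he, hb]
    have hmm : (m + 1 - 1 : ℕ) = m := by omega
    rw [hmm]
    push_cast
    linear_combination hc * (((m:ℂ) + (x+t+1))^m * (((n-m : ℕ):ℂ) + (y-t))^(n-m))
  have hS2 : (∑ m ∈ Finset.range (n+2),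
      ((((n+1).choose m : ℂ) * ((m:ℂ) + (x+t)) ^ m) *
        (((n+1-m : ℕ) : ℂ) * (((n+1-m : ℕ) : ℂ) + (y - t)) ^ (n+1-m-1) * (-1))))
      = -((n+1) * T n (x+t) (y-t+1)) := by
    rw [Finset.sum_range_succ]
    have hz : (n + 1 - (n+1) : ℕ) = 0 := by omega
    rw [hz]
    simp only [Nat.cast_zero, zero_mul, mul_zero, zero_mul, add_zero]
    rw [T, Finset.mul_sum, ← Finset.sum_neg_distrib]
    apply Finset.sum_congr rfl
    intro m hm
    have hm' : m ≤ n := by simpa [Nat.lt_succ_iff] using hm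
    have he1 : (n + 1 - m : ℕ) = (n - m) + 1 := by omega
    have he2 : (n + 1 - m - 1 : ℕ) = n - m := by omega
    have hc : ((n+1).choose m : ℂ) * (((n-m:ℕ):ℂ)+1) = ((n:ℂ)+1) * (n.choose m : ℂ) := by
      have h2 : (n.choose m * (n+1) : ℕ) = ((n+1).choose m * (n+1-m) : ℕ) :=
        Nat.choose_mul_succ_eq n m
      have h3 : (n.choose m * (n+1) : ℕ) = ((n+1).choose m * ((n-m)+1) : ℕ) := by
        rw [h2, he1]
      exact_mod_cast by push_cast [← h3]; ring
    rw [he2, he1]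
    have hb : (((n-m)+1 : ℕ):ℂ) + (y - t) = ((n-m : ℕ):ℂ) + (y-t+1) := by push_cast; ring
    rw [hb]
    push_cast
    linear_combination (-(((m:ℂ) + (x+t))^m * (((n-m : ℕ):ℂ) + (y-t+1))^(n-m))) * hc
  rw [hS1, hS2]
  ring

theorem T_depends_only_on_sum (n : ℕ) (x y x' y' : ℂ) (h : x + y = x' + y') :
    T n x y = T n x' y' := by
  induction n generalizing x y x' y' with
  | zero => simp [T]
  | succ n ih =>
    have hd : ∀ t : ℂ, HasDerivAt (fun u => T (n+1) (x+u) (y-u)) 0 t := by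
      intro t
      have := T_hasDerivAt n x y t
      have hz : T n (x+t+1) (y-t) = T n (x+t) (y-t+1) := ih _ _ _ _ (by ring)
      rw [hz, sub_self] at this
      exact this
    have hconst : (fun u => T (n+1) (x+u) (y-u)) 0 = (fun u => T (n+1) (x+u) (y-u)) (x'-x) :=
      is_const_of_deriv_eq_zero (fun t => (hd t).differentiableAt)
        (fun t => (hd t).deriv) 0 (x'-x)
    have h1 : x + (x' - x) = x' := by ring
    have h2 : y - (x' - x) = y' := by linear_combination h
    simpa [h1, h2] using hconst
end

section
/- For every natural number n \geq 1 and every complex number z, the function x \mapsto T_n(x, z - x) is complex-differentiable at every point x \in \mathbb{C}, with derivative equal to n \cdot ( T_{n-1}(1 + x, z - x) - T_{n-1}(x, z + 1 - x) ). -/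
open Finset

theorem hasDerivAt_T (n : ℕ) (hn : 1 ≤ n) (z x : ℂ) :
    HasDerivAt (fun x : ℂ => T n x (z - x))
      ((n : ℂ) * (T (n - 1) (1 + x) (z - x) - T (n - 1) x (z + 1 - x))) x := by
  obtain ⟨k, rfl⟩ : ∃ k, n = k + 1 := ⟨n - 1, (Nat.succ_pred_eq_of_pos hn).symm⟩
  simp only [Nat.add_sub_cancel]
  have hsum : HasDerivAt (fun x : ℂ => T (k + 1) x (z - x))
      (∑ m ∈ Finset.range (k + 2),
        ((((k + 1).choose m : ℂ) * ((m : ℂ) * ((m : ℂ) + x) ^ (m - 1) * 1)) *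
            (((k + 1 - m : ℕ) : ℂ) + (z - x)) ^ (k + 1 - m)
          + (((k + 1).choose m : ℂ) * ((m : ℂ) + x) ^ m) *
            (((k + 1 - m : ℕ) : ℂ) * (((k + 1 - m : ℕ) : ℂ) + (z - x)) ^ (k + 1 - m - 1) * (-1)))) x := by
    unfold T
    apply HasDerivAt.fun_sum
    intro m hm
    have h1 : HasDerivAt (fun x : ℂ => ((m : ℂ) + x) ^ m)
        ((m : ℂ) * ((m : ℂ) + x) ^ (m - 1) * 1) x :=
      ((hasDerivAt_id x).const_add (m : ℂ)).pow m
    have h2 : HasDerivAt (fun x : ℂ => (((k + 1 - m : ℕ) : ℂ) + (z - x)) ^ (k + 1 - m))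
        (((k + 1 - m : ℕ) : ℂ) * (((k + 1 - m : ℕ) : ℂ) + (z - x)) ^ (k + 1 - m - 1) * (-1)) x :=
      (((hasDerivAt_id x).const_sub z).const_add _).pow _
    exact (h1.const_mul _).mul h2
  convert hsum using 1
  rw [Finset.sum_add_distrib]
  have hS1 : ∑ m ∈ Finset.range (k + 2),
      (((k + 1).choose m : ℂ) * ((m : ℂ) * ((m : ℂ) + x) ^ (m - 1) * 1)) *
        (((k + 1 - m : ℕ) : ℂ) + (z - x)) ^ (k + 1 - m)
      = ((k : ℂ) + 1) * T k (1 + x) (z - x) := by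
    rw [Finset.sum_range_succ']
    simp only [Nat.cast_zero, zero_mul, mul_zero, zero_add, add_zero]
    unfold T
    rw [Finset.mul_sum]
    refine Finset.sum_congr rfl fun m hm => ?_
    have hmk : m ≤ k := Nat.lt_succ_iff.mp (Finset.mem_range.mp hm)
    have hsub : k + 1 - (m + 1) = k - m := by omega
    have hc : (((k + 1).choose (m + 1) : ℕ) : ℂ) * ((m : ℂ) + 1)
        = ((k : ℂ) + 1) * ((k.choose m : ℕ) : ℂ) := by
      exact_mod_cast congrArg (Nat.cast : ℕ → ℂ) (Nat.add_one_mul_choose_eq k m).symm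
    rw [hsub]
    simp only [Nat.add_sub_cancel]
    push_cast
    linear_combination (((m : ℂ) + 1 + x) ^ m * ((((k - m : ℕ)) : ℂ) + (z - x)) ^ (k - m)) * hc
  have hS2 : ∑ m ∈ Finset.range (k + 2),
      (((k + 1).choose m : ℂ) * ((m : ℂ) + x) ^ m) *
        (((k + 1 - m : ℕ) : ℂ) * (((k + 1 - m : ℕ) : ℂ) + (z - x)) ^ (k + 1 - m - 1) * (-1))
      = -(((k : ℂ) + 1) * T k x (z + 1 - x)) := by
    rw [Finset.sum_range_succ]
    simp only [Nat.sub_self, Nat.cast_zero, zero_mul, mul_zero, add_zero]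
    unfold T
    rw [Finset.mul_sum, ← Finset.sum_neg_distrib]
    refine Finset.sum_congr rfl fun m hm => ?_
    have hmk : m ≤ k := Nat.lt_succ_iff.mp (Finset.mem_range.mp hm)
    have hn1 : k + 1 - m = (k - m) + 1 := by omega
    have hsub : k + 1 - m - 1 = k - m := by omega
    have hc2 : (((k + 1).choose m : ℕ) : ℂ) * (((k - m : ℕ) : ℂ) + 1)
        = ((k.choose m : ℕ) : ℂ) * ((k : ℂ) + 1) := by
      have h := Nat.choose_mul_succ_eq k m
      rw [hn1] at h
      exact_mod_cast h.symm
    rw [hsub, hn1]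
    push_cast
    linear_combination (-(((m : ℂ) + x) ^ m * ((((k - m : ℕ)) : ℂ) + 1 + (z - x)) ^ (k - m))) * hc2
  rw [hS1, hS2]
  push_cast
  ring
end

section
/- The polynomial \mathcal{T}_n satisfies the recurrence \mathcal{T}_n(z) = (z + n)^n + n \cdot \mathcal{T}_{n-1}(z + 1) for every natural number n \geq 1 and every complex number z, together with the initial condition \mathcal{T}_0(z) = 1. -/
open Finset

/-- The polynomial `𝒯 n z = ∑_{m=0}^{n} C(n,m) m^m (n-m+z)^(n-m)` (with `0^0 = 1`). -/
noncomputable def calT (n : ℕ) (z : ℂ) : ℂ :=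
  ∑ m ∈ Finset.range (n + 1),
    (n.choose m : ℂ) * (m : ℂ) ^ m * (((n - m : ℕ) : ℂ) + z) ^ (n - m)

namespace CalTAux

open Polynomial

noncomputable def gsum (n j : ℕ) : ℂ :=
  ∑ k ∈ Finset.range (n+1), (-1:ℂ)^(n-k) * (n.choose k) * (k:ℂ)^j

lemma gsum_zero (n : ℕ) : gsum (n+1) 0 = 0 := by
  have h := add_pow (1:ℂ) (-1) (n+1)
  simp only [add_neg_cancel, one_pow, one_mul, zero_pow (Nat.succ_ne_zero n)] at h
  unfold gsum
  rw [← h.symm]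
  apply Finset.sum_congr rfl
  intro k hk
  ring

lemma gsum_succ_succ (n j : ℕ) :
    gsum (n+1) (j+1) = ((n:ℂ)+1) * ∑ i ∈ Finset.range (j+1), (j.choose i : ℂ) * gsum n i := by
  unfold gsum
  rw [Finset.sum_range_succ']
  simp only [Nat.cast_zero, zero_pow (Nat.succ_ne_zero j), mul_zero, add_zero,
    Nat.succ_sub_succ]
  have h1 : ∀ k ∈ Finset.range (n+1),
      (-1:ℂ)^(n-k) * (((n+1).choose (k+1) : ℕ) : ℂ) * ((k+1 : ℕ):ℂ)^(j+1)
      = ∑ i ∈ Finset.range (j+1),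
          ((n:ℂ)+1) * (j.choose i : ℂ) * ((-1:ℂ)^(n-k) * (n.choose k) * (k:ℂ)^i) := by
    intro k hk
    have hc : ((n:ℂ)+1) * (n.choose k) = (((n+1).choose (k+1) : ℕ) : ℂ) * ((k:ℂ)+1) := by
      exact_mod_cast congrArg (Nat.cast : ℕ → ℂ) (Nat.add_one_mul_choose_eq n k)
    have hp : ((k:ℂ)+1)^j = ∑ i ∈ Finset.range (j+1), (k:ℂ)^i * (j.choose i : ℂ) := by
      have := add_pow (k:ℂ) 1 j
      simpa using this
    push_cast
    calc (-1:ℂ)^(n-k) * ((n+1).choose (k+1) : ℂ) * ((k:ℂ)+1)^(j+1)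
        = ((-1:ℂ)^(n-k) * (((n+1).choose (k+1) : ℂ) * ((k:ℂ)+1))) * ((k:ℂ)+1)^j := by ring
      _ = ((-1:ℂ)^(n-k) * (((n:ℂ)+1) * (n.choose k))) * ((k:ℂ)+1)^j := by rw [← hc]
      _ = ∑ i ∈ Finset.range (j+1),
          ((n:ℂ)+1) * (j.choose i : ℂ) * ((-1:ℂ)^(n-k) * (n.choose k) * (k:ℂ)^i) := by
          rw [hp, Finset.mul_sum]
          exact Finset.sum_congr rfl fun i _ => by ring
  rw [Finset.sum_congr rfl h1, Finset.sum_comm, Finset.mul_sum]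
  refine Finset.sum_congr rfl fun i _ => ?_
  rw [Finset.mul_sum, Finset.mul_sum]
  exact Finset.sum_congr rfl fun k _ => by ring

lemma gsum_eq (n : ℕ) : (∀ j, j < n → gsum n j = 0) ∧ gsum n n = (n.factorial : ℂ) := by
  induction n with
  | zero =>
    refine ⟨fun j hj => absurd hj (Nat.not_lt_zero j), ?_⟩
    simp [gsum]
  | succ n ih =>
    constructor
    · intro j hj
      match j with
      | 0 => exact gsum_zero n
      | j+1 =>
        rw [gsum_succ_succ]
        have hz : ∀ i ∈ Finset.range (j+1), (j.choose i : ℂ) * gsum n i = 0 := by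
          intro i hi
          rw [ih.1 i (by have := Finset.mem_range.mp hi; omega), mul_zero]
        rw [Finset.sum_eq_zero hz, mul_zero]
    · rw [gsum_succ_succ, Finset.sum_range_succ]
      have hz : ∑ i ∈ Finset.range n, (n.choose i : ℂ) * gsum n i = 0 :=
        Finset.sum_eq_zero fun i hi => by rw [ih.1 i (Finset.mem_range.mp hi), mul_zero]
      rw [hz, zero_add, ih.2, Nat.choose_self, Nat.factorial_succ]
      push_cast
      ring

lemma anchor (n : ℕ) :
    ∑ k ∈ Finset.range (n+1), (n.choose k : ℂ) * (k:ℂ)^k * (-(k:ℂ))^(n-k)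
      = (n.factorial : ℂ) := by
  have h : ∀ k ∈ Finset.range (n+1),
      (n.choose k : ℂ) * (k:ℂ)^k * (-(k:ℂ))^(n-k) = (-1:ℂ)^(n-k) * (n.choose k) * (k:ℂ)^n := by
    intro k hk
    have hk' : k ≤ n := by have := Finset.mem_range.mp hk; omega
    rw [neg_pow, show (n.choose k : ℂ) * (k:ℂ)^k * ((-1:ℂ)^(n-k) * (k:ℂ)^(n-k))
        = (-1:ℂ)^(n-k) * (n.choose k) * ((k:ℂ)^k * (k:ℂ)^(n-k)) from by ring,
      ← pow_add, Nat.add_sub_cancel' hk']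
  rw [Finset.sum_congr rfl h]
  exact (gsum_eq n).2

noncomputable def Pp (n : ℕ) (t : ℂ) : Polynomial ℂ :=
  ∑ k ∈ Finset.range (n+1),
    Polynomial.C ((n.choose k : ℂ) * (k:ℂ)^k)
      * (Polynomial.X + Polynomial.C (t + ((n-k : ℕ):ℂ)))^(n-k)

noncomputable def Qp (n : ℕ) (t : ℂ) : Polynomial ℂ :=
  ∑ j ∈ Finset.range (n+1),
    Polynomial.C ((n.descFactorial j : ℂ))
      * (Polynomial.X + Polynomial.C (t + (n:ℂ)))^(n-j)

lemma derivPp (n : ℕ) (t : ℂ) :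
    (Pp (n+1) t).derivative = Polynomial.C ((n:ℂ)+1) * Pp n (t+1) := by
  unfold Pp
  rw [Finset.sum_range_succ, derivative_add, derivative_C_mul, Nat.sub_self, pow_zero,
    derivative_one, mul_zero, add_zero, derivative_sum, Finset.mul_sum]
  apply Finset.sum_congr rfl
  intro k hk
  have hk' : k ≤ n := by have := Finset.mem_range.mp hk; omega
  have e1 : (n+1) - k - 1 = n - k := by omega
  have e2 : t + ((n+1-k : ℕ):ℂ) = (t+1) + ((n-k:ℕ):ℂ) := by
    have h : (n+1-k : ℕ) = (n-k) + 1 := by omega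
    rw [h]; push_cast; ring
  have h2 : ((n+1-k:ℕ):ℂ) * ((n+1).choose k : ℂ) = ((n:ℂ)+1) * (n.choose k : ℂ) := by
    calc ((n+1-k:ℕ):ℂ) * ((n+1).choose k : ℂ)
        = (((n+1).choose k * (n+1-k) : ℕ) : ℂ) := by push_cast; ring
      _ = ((n.choose k * (n+1) : ℕ):ℂ) := by rw [← Nat.choose_mul_succ_eq]
      _ = ((n:ℂ)+1) * (n.choose k : ℂ) := by push_cast; ring
  rw [derivative_C_mul, derivative_X_add_C_pow, e1, e2,
    ← mul_assoc, ← mul_assoc, ← Polynomial.C_mul, ← Polynomial.C_mul]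
  have e3 : (((n+1).choose k : ℂ) * (k:ℂ)^k) * ((n+1-k:ℕ):ℂ)
      = ((n:ℂ)+1) * ((n.choose k : ℂ) * (k:ℂ)^k) := by
    linear_combination (k:ℂ)^k * h2
  rw [e3]

lemma derivQp (n : ℕ) (t : ℂ) :
    (Qp (n+1) t).derivative = Polynomial.C ((n:ℂ)+1) * Qp n (t+1) := by
  unfold Qp
  rw [Finset.sum_range_succ, derivative_add, derivative_C_mul, Nat.sub_self, pow_zero,
    derivative_one, mul_zero, add_zero, derivative_sum, Finset.mul_sum]
  apply Finset.sum_congr rfl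
  intro j hj
  have hj' : j ≤ n := by have := Finset.mem_range.mp hj; omega
  have e1 : (n+1) - j - 1 = n - j := by omega
  have e2 : t + ((n+1 : ℕ):ℂ) = (t+1) + (n:ℂ) := by push_cast; ring
  have h2 : ((n+1-j:ℕ):ℂ) * ((n+1).descFactorial j : ℂ)
      = ((n:ℂ)+1) * (n.descFactorial j : ℂ) := by
    calc ((n+1-j:ℕ):ℂ) * ((n+1).descFactorial j : ℂ)
        = (((n+1-j) * (n+1).descFactorial j : ℕ) : ℂ) := by push_cast; ring
      _ = (((n+1) * n.descFactorial j : ℕ):ℂ) := by rw [Nat.succ_descFactorial]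
      _ = ((n:ℂ)+1) * (n.descFactorial j : ℂ) := by push_cast; ring
  rw [derivative_C_mul, derivative_X_add_C_pow, e1, e2,
    ← mul_assoc, ← mul_assoc, ← Polynomial.C_mul, ← Polynomial.C_mul]
  have e3 : ((n+1).descFactorial j : ℂ) * ((n+1-j:ℕ):ℂ)
      = ((n:ℂ)+1) * ((n.descFactorial j : ℂ)) := by
    linear_combination h2
  rw [e3]

lemma evalPp (n : ℕ) (t : ℂ) : (Pp n t).eval (-(t + (n:ℂ))) = (n.factorial : ℂ) := by
  unfold Pp
  rw [Polynomial.eval_finset_sum]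
  rw [show ∑ k ∈ Finset.range (n+1), Polynomial.eval (-(t + (n:ℂ)))
      (Polynomial.C ((n.choose k : ℂ) * (k:ℂ)^k)
        * (Polynomial.X + Polynomial.C (t + ((n-k : ℕ):ℂ)))^(n-k))
      = ∑ k ∈ Finset.range (n+1), (n.choose k : ℂ) * (k:ℂ)^k * (-(k:ℂ))^(n-k) from ?_]
  · exact anchor n
  apply Finset.sum_congr rfl
  intro k hk
  have hk' : k ≤ n := by have := Finset.mem_range.mp hk; omega
  have hv : -(t+(n:ℂ)) + (t + ((n-k:ℕ):ℂ)) = -(k:ℂ) := by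
    rw [Nat.cast_sub hk']; ring
  simp only [Polynomial.eval_mul, Polynomial.eval_pow, Polynomial.eval_add,
    Polynomial.eval_X, Polynomial.eval_C, hv]

lemma evalQp (n : ℕ) (t : ℂ) : (Qp n t).eval (-(t + (n:ℂ))) = (n.factorial : ℂ) := by
  unfold Qp
  rw [Polynomial.eval_finset_sum, Finset.sum_range_succ]
  have hz : ∀ j ∈ Finset.range n, Polynomial.eval (-(t + (n:ℂ)))
      (Polynomial.C ((n.descFactorial j : ℂ))
        * (Polynomial.X + Polynomial.C (t + (n:ℂ)))^(n-j)) = 0 := by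
    intro j hj
    have hj' : j < n := Finset.mem_range.mp hj
    simp only [Polynomial.eval_mul, Polynomial.eval_pow, Polynomial.eval_add,
      Polynomial.eval_X, Polynomial.eval_C, neg_add_cancel]
    rw [zero_pow (by omega : n - j ≠ 0), mul_zero]
  rw [Finset.sum_eq_zero hz, zero_add, Nat.sub_self]
  simp [Nat.descFactorial_self]

lemma PQ (n : ℕ) : ∀ t : ℂ, Pp n t = Qp n t := by
  induction n with
  | zero => intro t; simp [Pp, Qp]
  | succ n ih =>
    intro t
    have hd : ((Pp (n+1) t) - (Qp (n+1) t)).derivative = 0 := by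
      rw [derivative_sub, derivPp, derivQp, ih (t+1), sub_self]
    have hdeg := Polynomial.natDegree_eq_zero_of_derivative_eq_zero hd
    have hC := Polynomial.eq_C_of_natDegree_eq_zero hdeg
    have he : ((Pp (n+1) t) - (Qp (n+1) t)).eval (-(t + ((n:ℂ)+1))) = 0 := by
      have h1 := evalPp (n+1) t
      have h2 := evalQp (n+1) t
      push_cast at h1 h2
      rw [Polynomial.eval_sub, h1, h2, sub_self]
    rw [hC, Polynomial.eval_C] at he
    rw [he, map_zero] at hC
    exact sub_eq_zero.mp hC

lemma calT_closed (n : ℕ) (z : ℂ) :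
    calT n z = ∑ j ∈ Finset.range (n+1), (n.descFactorial j : ℂ) * (z + (n:ℂ))^(n-j) := by
  have h : calT n z = (Pp n 0).eval z := by
    unfold calT Pp
    rw [Polynomial.eval_finset_sum]
    apply Finset.sum_congr rfl
    intro k hk
    simp only [Polynomial.eval_mul, Polynomial.eval_pow, Polynomial.eval_add,
      Polynomial.eval_X, Polynomial.eval_C]
    rw [show z + (0 + ((n-k:ℕ):ℂ)) = ((n-k:ℕ):ℂ) + z from by ring, mul_assoc]
  rw [h, PQ n 0]
  unfold Qp
  rw [Polynomial.eval_finset_sum]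
  apply Finset.sum_congr rfl
  intro j hj
  simp only [Polynomial.eval_mul, Polynomial.eval_pow, Polynomial.eval_add,
    Polynomial.eval_X, Polynomial.eval_C, zero_add]

end CalTAux

theorem calT_recurrence :
    (∀ n : ℕ, 1 ≤ n → ∀ z : ℂ,
      calT n z = (z + n) ^ n + (n : ℂ) * calT (n - 1) (z + 1)) ∧
    (∀ z : ℂ, calT 0 z = 1) := by
  constructor
  · intro n hn z
    obtain ⟨N, rfl⟩ : ∃ N, n = N + 1 := ⟨n - 1, by omega⟩
    rw [CalTAux.calT_closed (N+1) z, show N + 1 - 1 = N from rfl, CalTAux.calT_closed N (z+1)]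
    rw [Finset.sum_range_succ']
    have h0 : ((N+1 : ℕ).descFactorial 0 : ℂ) * (z + ((N+1 : ℕ):ℂ))^(N+1-0)
        = (z + ((N+1 : ℕ):ℂ))^(N+1) := by
      simp
    rw [h0]
    have h1 : ∀ j ∈ Finset.range (N+1),
        ((N+1 : ℕ).descFactorial (j+1) : ℂ) * (z + ((N+1 : ℕ):ℂ))^(N+1-(j+1))
        = ((N+1 : ℕ):ℂ) * ((N.descFactorial j : ℂ) * (z + 1 + (N:ℂ))^(N-j)) := by
      intro j hj
      rw [Nat.succ_descFactorial_succ, Nat.succ_sub_succ,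
        show z + ((N+1 : ℕ):ℂ) = z + 1 + (N:ℂ) from by push_cast; ring]
      push_cast
      ring
    rw [Finset.sum_congr rfl h1, ← Finset.mul_sum]
    push_cast
    ring
  · intro z
    simp [calT]
end

section
/- For every natural number n and every complex number z, the polynomial \mathcal{T}_n admits the expansion in powers of (z + n): \mathcal{T}_n(z) = \sum_{k=0}^{n} \frac{n!}{k!} (z + n)^k. -/
open Finset

open Polynomial

-- finite difference lemma
lemma findiff : ∀ n : ℕ, ∀ i ≤ n,
    ∑ j ∈ Finset.range (n+1), (-1:ℂ)^(n-j) * (n.choose j) * (j:ℂ)^i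
      = if i = n then (n.factorial : ℂ) else 0 := by
  intro n
  induction n with
  | zero => intro i hi; interval_cases i; simp
  | succ n ih =>
    intro i hi
    match i with
    | 0 =>
      have h := Int.alternating_sum_range_choose_of_ne (Nat.succ_ne_zero n)
      have h' : ∑ j ∈ Finset.range (n+2), (-1:ℂ)^j * ((n+1).choose j) = 0 := by
        have := congrArg (fun x : ℤ => (x : ℂ)) h
        push_cast at this ⊢
        simpa using this
      have key : ∀ j ∈ Finset.range (n+2), (-1:ℂ)^(n+1-j) * ((n+1).choose j) * (j:ℂ)^0
          = (-1:ℂ)^(n+1) * ((-1:ℂ)^j * ((n+1).choose j)) := by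
        intro j hj
        simp only [Finset.mem_range] at hj
        have : (-1:ℂ)^(n+1-j) * (-1:ℂ)^j = (-1:ℂ)^(n+1) := by
          rw [← pow_add, Nat.sub_add_cancel (by omega)]
        rw [pow_zero, mul_one, ← this]; ring_nf; simp [neg_one_sq]
      rw [Finset.sum_congr rfl key, ← Finset.mul_sum, h', mul_zero]
      simp [Nat.succ_ne_zero]
    | (i+1) =>
      have hin : i ≤ n := by omega
      have key : ∀ t ∈ Finset.range (n+1),
          (-1:ℂ)^(n+1-(t+1)) * (((n+1).choose (t+1)) : ℂ) * ((t+1:ℕ):ℂ)^(i+1)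
          = ((n:ℂ)+1) * ∑ s ∈ Finset.range (i+1),
              (i.choose s : ℂ) * ((-1:ℂ)^(n-t) * (n.choose t) * (t:ℂ)^s) := by
        intro t ht
        have hc : (((n+1).choose (t+1)) : ℂ) * ((t:ℂ)+1) = ((n:ℂ)+1) * (n.choose t) := by
          have h1 := congrArg (fun x : ℕ => (x:ℂ)) (Nat.add_one_mul_choose_eq n t)
          push_cast at h1
          linear_combination -h1
        have hb : ((t:ℂ)+1)^i = ∑ s ∈ Finset.range (i+1), (t:ℂ)^s * (i.choose s : ℂ) := by
          simpa using add_pow (t:ℂ) 1 i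
        have hs : n + 1 - (t+1) = n - t := by omega
        rw [hs]
        push_cast
        rw [pow_succ, hb, Finset.sum_mul, Finset.mul_sum, Finset.mul_sum]
        apply Finset.sum_congr rfl
        intro s hs'
        calc (-1:ℂ)^(n-t) * ((n+1).choose (t+1)) * ((t:ℂ)^s * (i.choose s) * ((t:ℂ)+1))
            = ((((n+1).choose (t+1)):ℂ) * ((t:ℂ)+1)) * ((-1:ℂ)^(n-t) * (t:ℂ)^s * (i.choose s)) := by ring
          _ = (((n:ℂ)+1) * (n.choose t)) * ((-1:ℂ)^(n-t) * (t:ℂ)^s * (i.choose s)) := by rw [hc]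
          _ = ((n:ℂ)+1) * ((i.choose s : ℂ) * ((-1:ℂ)^(n-t) * (n.choose t) * (t:ℂ)^s)) := by ring
      rw [Finset.sum_range_succ']
      rw [Finset.sum_congr rfl key]
      have h0 : (-1:ℂ)^(n+1-0) * (((n+1).choose 0):ℂ) * ((0:ℕ):ℂ)^(i+1) = 0 := by
        simp
      rw [h0, add_zero, ← Finset.mul_sum, Finset.sum_comm]
      have inner : ∀ s ∈ Finset.range (i+1),
          (∑ t ∈ Finset.range (n+1), (i.choose s : ℂ) * ((-1:ℂ)^(n-t) * (n.choose t) * (t:ℂ)^s))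
          = (i.choose s : ℂ) * (if s = n then (n.factorial : ℂ) else 0) := by
        intro s hs'
        rw [← Finset.mul_sum, ih s (by simp at hs'; omega)]
      rw [Finset.sum_congr rfl inner]
      by_cases hcase : i = n
      · subst hcase
        rw [Finset.sum_eq_single i]
        · simp [Nat.factorial_succ]
        · intro b hb hbne; simp [hbne]
        · intro hb; simp at hb
      · have : ∀ s ∈ Finset.range (i+1), (i.choose s : ℂ) * (if s = n then (n.factorial:ℂ) else 0) = 0 := by
          intro s hs'
          simp only [Finset.mem_range] at hs'
          have : s ≠ n := by omega
          simp [this]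
        rw [Finset.sum_congr rfl this, Finset.sum_const_zero, mul_zero]
        simp [hcase]

noncomputable def pp (n : ℕ) : Polynomial ℂ :=
  ∑ m ∈ Finset.range (n+1),
    Polynomial.C ((n.choose m : ℂ) * (m:ℂ)^m) * (Polynomial.X - Polynomial.C (m:ℂ))^(n-m)

noncomputable def qq (n : ℕ) : Polynomial ℂ :=
  ∑ k ∈ Finset.range (n+1),
    Polynomial.C ((n.factorial : ℂ)/(k.factorial : ℂ)) * Polynomial.X^k

lemma dpp (n : ℕ) : derivative (pp (n+1)) = Polynomial.C ((n:ℂ)+1) * pp n := by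
  unfold pp
  rw [derivative_sum, Finset.sum_range_succ, Finset.mul_sum]
  have hlast : derivative (Polynomial.C (((n+1).choose (n+1) : ℂ) * ((n+1:ℕ):ℂ)^(n+1))
      * (Polynomial.X - Polynomial.C ((n+1:ℕ):ℂ))^(n+1-(n+1))) = 0 := by
    rw [Nat.sub_self, pow_zero, mul_one, derivative_C]
  rw [hlast, add_zero]
  apply Finset.sum_congr rfl
  intro m hm
  simp only [Finset.mem_range] at hm
  have hm' : m ≤ n := by omega
  rw [derivative_C_mul, derivative_pow, derivative_sub, derivative_X, derivative_C, sub_zero,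
    mul_one]
  have h1 : n + 1 - m - 1 = n - m := by omega
  rw [h1]
  rw [← mul_assoc, ← Polynomial.C_mul, ← mul_assoc, ← Polynomial.C_mul]
  congr 1
  congr 1
  have h2 := congrArg (fun x : ℕ => (x:ℂ)) (Nat.choose_mul_succ_eq n m)
  push_cast [Nat.cast_sub (by omega : m ≤ n + 1)] at h2
  push_cast [Nat.cast_sub (by omega : m ≤ n + 1)]
  linear_combination (-(m:ℂ)^m) * h2

lemma dqq (n : ℕ) : derivative (qq (n+1)) = Polynomial.C ((n:ℂ)+1) * qq n := by
  unfold qq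
  rw [derivative_sum, Finset.sum_range_succ', Finset.mul_sum]
  have h0 : derivative (Polynomial.C (((n+1).factorial : ℂ)/((0:ℕ).factorial : ℂ))
      * Polynomial.X^0) = 0 := by simp
  rw [h0, add_zero]
  apply Finset.sum_congr rfl
  intro k hk
  rw [derivative_C_mul, derivative_X_pow]
  have h1 : k + 1 - 1 = k := rfl
  rw [h1, ← mul_assoc, ← Polynomial.C_mul, ← mul_assoc, ← Polynomial.C_mul]
  congr 2
  have hk1 : ((k+1).factorial : ℂ) ≠ 0 := Nat.cast_ne_zero.2 (Nat.factorial_ne_zero _)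
  have hk2 : ((k).factorial : ℂ) ≠ 0 := Nat.cast_ne_zero.2 (Nat.factorial_ne_zero _)
  field_simp
  push_cast [Nat.factorial_succ]
  ring

lemma pp0 (n : ℕ) : (pp n).eval 0 = (n.factorial : ℂ) := by
  unfold pp
  rw [Polynomial.eval_finset_sum]
  have key : ∀ m ∈ Finset.range (n+1),
      Polynomial.eval 0 (Polynomial.C ((n.choose m : ℂ) * (m:ℂ)^m)
        * (Polynomial.X - Polynomial.C (m:ℂ))^(n-m))
      = (-1:ℂ)^(n-m) * (n.choose m) * (m:ℂ)^n := by
    intro m hm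
    simp only [Finset.mem_range] at hm
    simp only [Polynomial.eval_mul, Polynomial.eval_C, Polynomial.eval_pow,
      Polynomial.eval_sub, Polynomial.eval_X, zero_sub]
    rw [neg_pow]
    have : (m:ℂ)^m * (m:ℂ)^(n-m) = (m:ℂ)^n := by
      rw [← pow_add]; congr 1; omega
    calc (n.choose m : ℂ) * (m:ℂ)^m * ((-1:ℂ)^(n-m) * (m:ℂ)^(n-m))
        = (-1:ℂ)^(n-m) * (n.choose m) * ((m:ℂ)^m * (m:ℂ)^(n-m)) := by ring
      _ = (-1:ℂ)^(n-m) * (n.choose m) * (m:ℂ)^n := by rw [this]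
  rw [Finset.sum_congr rfl key]
  have := findiff n n le_rfl
  simp only [if_pos rfl] at this
  exact this

lemma qq0 (n : ℕ) : (qq n).eval 0 = (n.factorial : ℂ) := by
  unfold qq
  rw [Polynomial.eval_finset_sum]
  rw [Finset.sum_eq_single 0]
  · simp
  · intro b hb hbne
    simp [zero_pow hbne]
  · intro h; simp at h

lemma pp_eq_qq : ∀ n, pp n = qq n := by
  intro n
  induction n with
  | zero =>
    unfold pp qq
    norm_num
  | succ n ih =>
    have hd : derivative (pp (n+1) - qq (n+1)) = 0 := by
      rw [derivative_sub, dpp, dqq, ih, sub_self]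
    have hC := Polynomial.eq_C_of_derivative_eq_zero hd
    have he : (pp (n+1) - qq (n+1)).coeff 0 = 0 := by
      rw [Polynomial.coeff_zero_eq_eval_zero, Polynomial.eval_sub, pp0, qq0, sub_self]
    rw [he, map_zero] at hC
    exact sub_eq_zero.1 hC

theorem calT_expansion (n : ℕ) (z : ℂ) :
    calT n z = ∑ k ∈ Finset.range (n + 1), ((n.factorial : ℂ) / (k.factorial : ℂ)) * (z + n) ^ k := by
  have h1 : calT n z = (pp n).eval (z + n) := by
    unfold calT pp
    rw [Polynomial.eval_finset_sum]
    apply Finset.sum_congr rfl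
    intro m hm
    simp only [Finset.mem_range] at hm
    simp only [Polynomial.eval_mul, Polynomial.eval_C, Polynomial.eval_pow,
      Polynomial.eval_sub, Polynomial.eval_X]
    have hb : ((n - m : ℕ) : ℂ) + z = z + (n:ℂ) - m := by
      rw [Nat.cast_sub (by omega : m ≤ n)]; ring
    rw [hb]
  rw [h1, pp_eq_qq]
  unfold qq
  rw [Polynomial.eval_finset_sum]
  simp
end

section
/- For every natural number n, evaluating the polynomial \mathcal{T}_n at z = -n gives the factorial: \mathcal{T}_n(-n) = n!. -/
open Finset

noncomputable def S (n k : ℕ) : ℂ :=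
  ∑ m ∈ Finset.range (n + 1), (-1 : ℂ) ^ m * (n.choose m : ℂ) * (m : ℂ) ^ k

lemma S_key (n k : ℕ) :
    S (n + 1) (k + 1) = -((n : ℂ) + 1) * ∑ i ∈ Finset.range (k + 1), (k.choose i : ℂ) * S n i := by
  have h2 : ∀ j : ℕ, ((n + 1).choose (j + 1) : ℂ) * ((j : ℂ) + 1) = ((n : ℂ) + 1) * (n.choose j : ℂ) := by
    intro j
    have h := congrArg (Nat.cast : ℕ → ℂ) (Nat.add_one_mul_choose_eq n j)
    push_cast [Nat.succ_eq_add_one] at h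
    exact h.symm
  have h1 : S (n + 1) (k + 1)
      = ∑ j ∈ Finset.range (n + 1),
        (-1 : ℂ) ^ (j + 1) * ((n + 1).choose (j + 1) : ℂ) * ((j : ℂ) + 1) ^ (k + 1) := by
    rw [S, Finset.sum_range_succ' _ (n + 1)]
    simp
  calc S (n + 1) (k + 1)
      = ∑ j ∈ Finset.range (n + 1), ∑ i ∈ Finset.range (k + 1),
          -((n : ℂ) + 1) * ((k.choose i : ℂ) * ((-1 : ℂ) ^ j * (n.choose j : ℂ) * (j : ℂ) ^ i)) := by
        rw [h1]
        refine Finset.sum_congr rfl fun j _ => ?_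
        have expand : ((j : ℂ) + 1) ^ k = ∑ i ∈ Finset.range (k + 1), (j : ℂ) ^ i * (k.choose i : ℂ) := by
          simpa using add_pow (j : ℂ) 1 k
        rw [pow_succ ((j : ℂ) + 1), expand, Finset.sum_mul, Finset.mul_sum]
        apply Finset.sum_congr rfl
        intro i _
        linear_combination ((-1 : ℂ) ^ (j + 1) * (j : ℂ) ^ i * (k.choose i : ℂ)) * h2 j
    _ = -((n : ℂ) + 1) * ∑ i ∈ Finset.range (k + 1), (k.choose i : ℂ) * S n i := by
        rw [Finset.sum_comm]
        simp only [S, Finset.mul_sum]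

lemma S_lt (n k : ℕ) (h : k < n) : S n k = 0 := by
  induction n generalizing k with
  | zero => omega
  | succ n ih =>
    cases k with
    | zero =>
      have hz : (∑ i ∈ Finset.range (n + 1 + 1), (-1 : ℤ) ^ i * ((n+1).choose i : ℤ)) = 0 := by
        simpa using Int.alternating_sum_range_choose_of_ne (Nat.succ_ne_zero n)
      have : S (n + 1) 0 = ∑ m ∈ Finset.range (n + 2), (-1 : ℂ) ^ m * ((n+1).choose m : ℂ) := by
        simp [S]
      rw [this]
      exact_mod_cast congrArg (Int.cast : ℤ → ℂ) hz
    | succ k =>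
      rw [S_key]
      have : ∑ i ∈ Finset.range (k + 1), (k.choose i : ℂ) * S n i = 0 := by
        apply Finset.sum_eq_zero
        intro i hi
        rw [ih i (by simp at hi; omega), mul_zero]
      rw [this, mul_zero]

lemma S_diag (n : ℕ) : S n n = (-1 : ℂ) ^ n * (n.factorial : ℂ) := by
  induction n with
  | zero => simp [S]
  | succ n ih =>
    rw [S_key, Finset.sum_range_succ]
    have : ∑ i ∈ Finset.range n, (n.choose i : ℂ) * S n i = 0 := by
      apply Finset.sum_eq_zero
      intro i hi
      rw [S_lt n i (Finset.mem_range.mp hi), mul_zero]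
    rw [this, ih, Nat.choose_self]
    push_cast [Nat.factorial_succ]
    ring

theorem calT_neg_n (n : ℕ) : calT n (-(n : ℂ)) = (n.factorial : ℂ) := by
  have key : calT n (-(n : ℂ)) = (-1 : ℂ) ^ n * S n n := by
    rw [calT, S, Finset.mul_sum]
    apply Finset.sum_congr rfl
    intro m hm
    have hmn : m ≤ n := by
      have := Finset.mem_range.mp hm; omega
    have hcast : ((n - m : ℕ) : ℂ) + -(n : ℂ) = -(m : ℂ) := by
      push_cast [hmn]; ring
    rw [hcast, neg_pow]
    have hsign : (-1 : ℂ) ^ (n - m) = (-1 : ℂ) ^ n * (-1 : ℂ) ^ m := by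
      have hnm : n + m = (n - m) + 2 * m := by omega
      calc (-1 : ℂ) ^ (n - m) = (-1 : ℂ) ^ (n - m) * (((-1 : ℂ) ^ 2) ^ m) := by norm_num
        _ = (-1 : ℂ) ^ ((n - m) + 2 * m) := by rw [← pow_mul, ← pow_add]
        _ = (-1 : ℂ) ^ (n + m) := by rw [← hnm]
        _ = (-1 : ℂ) ^ n * (-1 : ℂ) ^ m := by rw [pow_add]
    have hpow : (m : ℂ) ^ m * (m : ℂ) ^ (n - m) = (m : ℂ) ^ n := by
      rw [← pow_add]; congr 1; omega
    rw [hsign]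
    linear_combination ((-1 : ℂ) ^ n * (-1 : ℂ) ^ m * (n.choose m : ℂ)) * hpow
  rw [key, S_diag, ← mul_assoc, ← mul_pow]
  norm_num
end

section
/- For every natural number n and all complex numbers x and z, the following identity holds: \sum_{m=0}^{n} \binom{n}{m} (m+x)^m (n-m+z-x)^{n-m} = \sum_{k=0}^{n} \frac{n!}{k!} (z + n)^k. -/
open Finset

section AuxTQ
open Nat
lemma fwdDiff_iter_pow (n : ℕ) : ∀ j ≤ n, (fwdDiff (1:ℂ))^[n] (fun t : ℂ => t ^ j)
    = fun _ => if j = n then (n ! : ℂ) else 0 := by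
  induction n with
  | zero => intro j hj; interval_cases j; simp
  | succ n ih =>
    intro j hj
    rw [Function.iterate_succ_apply]
    have h1 : fwdDiff (1:ℂ) (fun t : ℂ => t ^ j)
        = ∑ i ∈ range j, (j.choose i : ℂ) • (fun t : ℂ => t ^ i) := by
      funext t
      simp only [fwdDiff, Finset.sum_apply, Pi.smul_apply, smul_eq_mul]
      rw [add_pow]
      rw [Finset.sum_range_succ]
      simp [mul_comm]
    rw [h1, fwdDiff_iter_finset_sum]
    have h2 : ∀ i ∈ range j, (fwdDiff (1:ℂ))^[n] ((j.choose i : ℂ) • (fun t : ℂ => t ^ i))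
        = (j.choose i : ℂ) • ((fwdDiff (1:ℂ))^[n] (fun t : ℂ => t ^ i)) := by
      intro i _; exact fwdDiff_iter_const_smul _ _ _ _
    rw [Finset.sum_congr rfl h2]
    rcases eq_or_lt_of_le hj with h | h
    · subst h
      funext t
      rw [Finset.sum_congr rfl (fun i hi => by
        rw [ih i (by simp at hi; omega : i ≤ n)])]
      simp only [Finset.sum_apply, Pi.smul_apply, smul_eq_mul]
      rw [Finset.sum_eq_single n ?_ ?_]
      · simp [Nat.factorial_succ]
      · intro b _ hb; simp [hb]
      · intro h; simp at h
    · funext t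
      rw [Finset.sum_congr rfl (fun i hi => by
        rw [ih i (by simp at hi; omega : i ≤ n)])]
      simp only [Finset.sum_apply, Pi.smul_apply, smul_eq_mul]
      rw [if_neg (by omega)]
      apply Finset.sum_eq_zero
      intro i hi
      simp at hi
      rw [if_neg (by omega)]
      simp

lemma alt_sum_pow (n : ℕ) :
    ∑ m ∈ range (n + 1), (-1 : ℂ) ^ (n - m) * (n.choose m : ℂ) * (m : ℂ) ^ n = (n ! : ℂ) := by
  have h := fwdDiff_iter_eq_sum_shift (fun t : ℂ => t ^ n) n (0 : ℂ) (h := (1:ℂ))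
  rw [fwdDiff_iter_pow n n le_rfl] at h
  simp only [if_true, eq_self_iff_true] at h
  rw [h]
  apply Finset.sum_congr rfl
  intro m hm
  simp only [zsmul_eq_mul, nsmul_eq_mul, zero_add, mul_one]
  push_cast
  ring

noncomputable def Tfun (n : ℕ) (x z : ℂ) : ℂ :=
  ∑ m ∈ range (n + 1), (n.choose m : ℂ) * ((m : ℂ) + x) ^ m * (((n - m : ℕ) : ℂ) + z - x) ^ (n - m)

noncomputable def Qfun (n : ℕ) (z : ℂ) : ℂ :=
  ∑ k ∈ range (n + 1), ((n ! : ℂ) / (k ! : ℂ)) * (z + n) ^ k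

lemma sum_aux (n : ℕ) (x z : ℂ) :
    (∑ m ∈ range (n+1+1), ((n+1).choose m : ℂ) * ((m:ℂ)+x)^m *
        (((n+1-m : ℕ):ℂ) * (((n+1-m : ℕ):ℂ) + z - x)^(n+1-m-1) * 1))
      = ((n:ℂ)+1) * Tfun n x (z+1) := by
    rw [Finset.sum_range_succ]
    simp only [Nat.sub_self, Nat.cast_zero, zero_mul, mul_zero, add_zero]
    rw [Tfun, Finset.mul_sum]
    apply Finset.sum_congr rfl
    intro m hm
    simp only [Finset.mem_range] at hm
    have hm' : m ≤ n := by omega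
    have h1 : n + 1 - m = (n - m) + 1 := by omega
    have h2 : n + 1 - m - 1 = n - m := by omega
    have h3 : (((n+1).choose m : ℕ) : ℂ) * (((n - m : ℕ) : ℂ) + 1) = ((n:ℂ)+1) * (n.choose m : ℂ) := by
      have hnat := Nat.choose_mul_succ_eq n m
      calc (((n+1).choose m : ℕ) : ℂ) * (((n - m : ℕ) : ℂ) + 1)
          = (((n+1).choose m * ((n - m) + 1) : ℕ) : ℂ) := by push_cast; ring
        _ = (((n+1).choose m * (n + 1 - m) : ℕ) : ℂ) := by rw [← h1]
        _ = ((n.choose m * (n + 1) : ℕ) : ℂ) := by rw [hnat]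
        _ = ((n:ℂ)+1) * (n.choose m : ℂ) := by push_cast; ring
    rw [h2, h1]
    push_cast
    linear_combination (((m:ℂ)+x)^m * (((n - m : ℕ):ℂ) + 1 + z - x)^(n-m)) * h3

lemma hT_deriv (n : ℕ) (x z : ℂ) :
    HasDerivAt (fun z => Tfun (n+1) x z) (((n:ℂ)+1) * Tfun n x (z+1)) z := by
  have H : ∀ m ∈ range (n+1+1), HasDerivAt
      (fun z : ℂ => ((n+1).choose m : ℂ) * ((m:ℂ)+x)^m * (((n+1-m : ℕ):ℂ) + z - x)^(n+1-m))
      (((n+1).choose m : ℂ) * ((m:ℂ)+x)^m *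
        (((n+1-m : ℕ):ℂ) * (((n+1-m : ℕ):ℂ) + z - x)^(n+1-m-1) * 1)) z := by
    intro m _
    exact ((((hasDerivAt_id z).const_add (((n+1-m : ℕ):ℂ))).sub_const x).pow _).const_mul _
  have hs := HasDerivAt.fun_sum H
  rw [sum_aux n x z] at hs
  exact hs

lemma hQ_deriv (n : ℕ) (z : ℂ) :
    HasDerivAt (fun z => Qfun (n+1) z) (((n:ℂ)+1) * Qfun n (z+1)) z := by
  have H : ∀ k ∈ range (n+1+1), HasDerivAt
      (fun z : ℂ => (((n+1)! : ℂ) / (k ! : ℂ)) * (z + ((n+1 : ℕ) : ℂ))^k)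
      ((((n+1)! : ℂ) / (k ! : ℂ)) * ((k:ℂ) * (z + ((n+1 : ℕ) : ℂ))^(k-1) * 1)) z := by
    intro k _
    exact (((hasDerivAt_id z).add_const _).pow _).const_mul _
  have hs := HasDerivAt.fun_sum H
  have heq : (∑ k ∈ range (n+1+1), (((n+1)! : ℂ) / (k ! : ℂ)) * ((k:ℂ) * (z + ((n+1 : ℕ) : ℂ))^(k-1) * 1))
      = ((n:ℂ)+1) * Qfun n (z+1) := by
    rw [Finset.sum_range_succ']
    simp only [Nat.cast_zero, zero_mul, mul_zero, add_zero]
    rw [Qfun, Finset.mul_sum]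
    apply Finset.sum_congr rfl
    intro i hi
    have hfi : (i ! : ℂ) ≠ 0 := by exact_mod_cast (Nat.factorial_pos i).ne'
    have hi1 : ((i:ℂ)+1) ≠ 0 := by
      exact_mod_cast (Nat.cast_add_one_ne_zero i : ((i:ℂ)+1) ≠ 0)
    have e1 : ((n+1)! : ℂ) = ((n:ℂ)+1) * (n ! : ℂ) := by
      rw [Nat.factorial_succ]; push_cast; ring
    have e2 : ((i+1)! : ℂ) = ((i:ℂ)+1) * (i ! : ℂ) := by
      rw [Nat.factorial_succ]; push_cast; ring
    simp only [Nat.add_sub_cancel]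
    rw [e1, e2]
    push_cast
    field_simp
    ring
  rw [heq] at hs
  exact hs

lemma hTx_deriv (n : ℕ) (x z : ℂ) :
    HasDerivAt (fun x => Tfun (n+1) x z)
      (((n:ℂ)+1) * Tfun n (x+1) (z+1) - ((n:ℂ)+1) * Tfun n x (z+1)) x := by
  have H : ∀ m ∈ range (n+1+1), HasDerivAt
      (fun x : ℂ => ((n+1).choose m : ℂ) * ((m:ℂ)+x)^m * (((n+1-m : ℕ):ℂ) + z - x)^(n+1-m))
      ((((n+1).choose m : ℂ) * ((m:ℂ) * ((m:ℂ)+x)^(m-1) * 1)) * (((n+1-m : ℕ):ℂ) + z - x)^(n+1-m)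
        + (((n+1).choose m : ℂ) * ((m:ℂ)+x)^m) *
          (((n+1-m : ℕ):ℂ) * (((n+1-m : ℕ):ℂ) + z - x)^(n+1-m-1) * -1)) x := by
    intro m _
    exact ((((hasDerivAt_id x).const_add ((m:ℂ))).pow _).const_mul _).mul
      (((hasDerivAt_id x).const_sub (((n+1-m : ℕ):ℂ) + z)).pow _)
  have hs := HasDerivAt.fun_sum H
  have split : (∑ m ∈ range (n+1+1),
      ((((n+1).choose m : ℂ) * ((m:ℂ) * ((m:ℂ)+x)^(m-1) * 1)) * (((n+1-m : ℕ):ℂ) + z - x)^(n+1-m)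
        + (((n+1).choose m : ℂ) * ((m:ℂ)+x)^m) *
          (((n+1-m : ℕ):ℂ) * (((n+1-m : ℕ):ℂ) + z - x)^(n+1-m-1) * -1)))
      = (∑ m ∈ range (n+1+1),
          (((n+1).choose m : ℂ) * ((m:ℂ) * ((m:ℂ)+x)^(m-1) * 1)) * (((n+1-m : ℕ):ℂ) + z - x)^(n+1-m))
        - (∑ m ∈ range (n+1+1), ((n+1).choose m : ℂ) * ((m:ℂ)+x)^m *
            (((n+1-m : ℕ):ℂ) * (((n+1-m : ℕ):ℂ) + z - x)^(n+1-m-1) * 1)) := by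
    rw [Finset.sum_add_distrib, sub_eq_add_neg, ← Finset.sum_neg_distrib]
    congr 1
    apply Finset.sum_congr rfl
    intro m _
    ring
  have hA : (∑ m ∈ range (n+1+1),
          (((n+1).choose m : ℂ) * ((m:ℂ) * ((m:ℂ)+x)^(m-1) * 1)) * (((n+1-m : ℕ):ℂ) + z - x)^(n+1-m))
      = ((n:ℂ)+1) * Tfun n (x+1) (z+1) := by
    rw [Finset.sum_range_succ']
    simp only [Nat.cast_zero, zero_mul, mul_zero, add_zero, Nat.add_sub_cancel]
    rw [Tfun, Finset.mul_sum]
    apply Finset.sum_congr rfl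
    intro j hj
    simp only [Finset.mem_range] at hj
    have h1 : n + 1 - (j + 1) = n - j := by omega
    have h3 : (((n+1).choose (j+1) : ℕ) : ℂ) * ((j:ℂ)+1) = ((n:ℂ)+1) * (n.choose j : ℂ) := by
      have hnat := Nat.add_one_mul_choose_eq n j
      calc (((n+1).choose (j+1) : ℕ) : ℂ) * ((j:ℂ)+1)
          = (((n+1).choose (j+1) * (j+1) : ℕ) : ℂ) := by push_cast; ring
        _ = (((n+1) * n.choose j : ℕ) : ℂ) := by rw [← hnat]
        _ = ((n:ℂ)+1) * (n.choose j : ℂ) := by push_cast; ring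
    rw [h1]
    push_cast
    linear_combination ((((j:ℂ))+1+x)^j * (((n - j : ℕ):ℂ) + z - x)^(n-j)) * h3
  rw [split, hA, sum_aux n x z] at hs
  exact hs

lemma Qval (n : ℕ) : Qfun (n+1) (-((n:ℂ)+1)) = ((n+1)! : ℂ) := by
  rw [Qfun, Finset.sum_range_succ']
  have h0 : (-((n:ℂ)+1) + ((n+1 : ℕ):ℂ)) = 0 := by push_cast; ring
  rw [h0]
  simp [Nat.factorial_zero]

lemma Tval (n : ℕ) : Tfun (n+1) 0 (-((n:ℂ)+1)) = ((n+1)! : ℂ) := by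
  rw [Tfun, ← alt_sum_pow (n+1)]
  apply Finset.sum_congr rfl
  intro m hm
  simp only [Finset.mem_range] at hm
  have hm' : m ≤ n + 1 := by omega
  have hb : ((n+1-m : ℕ):ℂ) + (-((n:ℂ)+1)) - 0 = -(m:ℂ) := by
    rw [Nat.cast_sub hm']
    push_cast
    ring
  rw [hb, neg_pow]
  have hpow : (m:ℂ)^m * (m:ℂ)^(n+1-m) = (m:ℂ)^(n+1) := by
    rw [← pow_add]
    congr 1
    omega
  rw [add_zero]
  linear_combination ((-1:ℂ)^(n+1-m) * (((n+1).choose m : ℕ):ℂ)) * hpow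

lemma main_TQ : ∀ n : ℕ, ∀ x z : ℂ, Tfun n x z = Qfun n z := by
  intro n
  induction n with
  | zero => intro x z; simp [Tfun, Qfun]
  | succ n ih =>
    intro x z
    have hconstx : ∀ z : ℂ, ∀ x x' : ℂ, Tfun (n+1) x z = Tfun (n+1) x' z := by
      intro z x x'
      apply is_const_of_deriv_eq_zero (f := fun x => Tfun (n+1) x z)
      · intro y
        exact (hTx_deriv n y z).differentiableAt
      · intro y
        have h := hTx_deriv n y z
        rw [ih (y+1) (z+1), ih y (z+1), sub_self] at h
        exact h.deriv
    have hconstz : ∀ z z' : ℂ, Tfun (n+1) x z - Qfun (n+1) z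
        = Tfun (n+1) x z' - Qfun (n+1) z' := by
      intro z z'
      apply is_const_of_deriv_eq_zero (f := fun z => Tfun (n+1) x z - Qfun (n+1) z)
      · intro y
        exact ((hT_deriv n x y).sub (hQ_deriv n y)).differentiableAt
      · intro y
        have h := (hT_deriv n x y).sub (hQ_deriv n y)
        rw [ih x (y+1), sub_self] at h
        exact h.deriv
    have key : Tfun (n+1) x (-((n:ℂ)+1)) - Qfun (n+1) (-((n:ℂ)+1)) = 0 := by
      rw [hconstx _ x 0, Tval, Qval, sub_self]
    have := hconstz z (-((n:ℂ)+1))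
    rw [key] at this
    exact sub_eq_zero.mp this

end AuxTQ

theorem T_eq_factorial_sum (n : ℕ) (x z : ℂ) :
    ∑ m ∈ Finset.range (n + 1),
        (n.choose m : ℂ) * ((m : ℂ) + x) ^ m * (((n - m : ℕ) : ℂ) + z - x) ^ (n - m) =
      ∑ k ∈ Finset.range (n + 1), ((n.factorial : ℂ) / (k.factorial : ℂ)) * (z + n) ^ k := by
  exact main_TQ n x z
end

section
/- For every natural number n and every complex number z, the polynomial \mathcal{T}_n admits the expansion in powers of (z + n + 1): \mathcal{T}_n(z) = \sum_{k=0}^{n} \binom{n}{k} \mathcal{T}_{n-k}(k - n - 1) \, (z + n + 1)^k. -/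
open Finset

lemma tri_swap (N : ℕ) (f : ℕ → ℕ → ℂ) :
    ∑ m ∈ Finset.range N, ∑ k ∈ Finset.range (N - m), f m k =
      ∑ k ∈ Finset.range N, ∑ m ∈ Finset.range (N - k), f m k := by
  rw [Finset.sum_sigma', Finset.sum_sigma']
  refine Finset.sum_nbij' (fun p => ⟨p.2, p.1⟩) (fun p => ⟨p.2, p.1⟩) ?_ ?_ ?_ ?_ ?_ <;>
    simp only [Finset.mem_sigma, Finset.mem_range] <;> intros <;> first | omega | rfl | trivial

theorem calT_expansion_shifted (n : ℕ) (z : ℂ) :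
    calT n z =
      ∑ k ∈ Finset.range (n + 1),
        (n.choose k : ℂ) * calT (n - k) ((k : ℂ) - n - 1) * (z + n + 1) ^ k := by
  have hLHS : calT n z = ∑ m ∈ Finset.range (n + 1), ∑ k ∈ Finset.range (n + 1 - m),
      (n.choose m : ℂ) * (m : ℂ) ^ m *
        ((z + n + 1) ^ k * (-((m : ℂ) + 1)) ^ (n - m - k) * ((n - m).choose k : ℂ)) := by
    unfold calT
    refine Finset.sum_congr rfl fun m hm => ?_
    rw [Finset.mem_range] at hm
    have hm' : m ≤ n := Nat.lt_succ_iff.mp hm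
    have hb : (((n - m : ℕ) : ℂ) + z) = (z + n + 1) + (-((m : ℂ) + 1)) := by
      push_cast [Nat.cast_sub hm']; ring
    rw [hb, add_pow, Finset.mul_sum, show n + 1 - m = n - m + 1 by omega]
  rw [hLHS, tri_swap]
  refine Finset.sum_congr rfl fun k hk => ?_
  rw [Finset.mem_range] at hk
  have hk' : k ≤ n := Nat.lt_succ_iff.mp hk
  unfold calT
  rw [Finset.mul_sum, Finset.sum_mul, show n + 1 - k = n - k + 1 by omega]
  refine Finset.sum_congr rfl fun m hm => ?_
  rw [Finset.mem_range] at hm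
  have hm' : m ≤ n - k := Nat.lt_succ_iff.mp hm
  have hbase : (((n - k - m : ℕ) : ℂ) + ((k : ℂ) - n - 1)) = -((m : ℂ) + 1) := by
    push_cast [Nat.cast_sub hm', Nat.cast_sub hk']; ring
  rw [hbase]
  have h1 : n.choose (m + k) * (m + k).choose m = n.choose m * (n - m).choose k := by
    have := Nat.choose_mul (n := n) (Nat.le_add_right m k)
    simpa using this
  have h2 : n.choose (m + k) * (m + k).choose k = n.choose k * (n - k).choose m := by
    have := Nat.choose_mul (n := n) (Nat.le_add_left k m)
    simpa using this
  have h3 : (m + k).choose m = (m + k).choose k := by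
    rw [← Nat.choose_symm (Nat.le_add_left k m)]; congr 1; omega
  have hch : n.choose m * (n - m).choose k = n.choose k * (n - k).choose m := by
    rw [← h1, h3, h2]
  have hchC : (n.choose m : ℂ) * ((n - m).choose k : ℂ)
      = (n.choose k : ℂ) * ((n - k).choose m : ℂ) := by exact_mod_cast congrArg (Nat.cast : ℕ → ℂ) hch
  rw [show n - m - k = n - k - m by omega]
  linear_combination ((m : ℂ) ^ m * (-((m : ℂ) + 1)) ^ (n - k - m) * (z + n + 1) ^ k) * hchC
end

section
/- For all natural numbers n and k with k \leq n, the following finite sum identity holds: \sum_{m=0}^{n-k} (-1)^{n-m-k} \binom{n}{m} \binom{n-m}{k} m^m (1+m)^{n-m-k} = \binom{n}{k} \, \mathcal{T}_{n-k}(k - n - 1); equivalently, the k-th coefficient of the Taylor expansion of \mathcal{T}_n(z) around z = -n-1 equals \binom{n}{k} \mathcal{T}_{n-k}(k-n-1). -/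
open Finset

lemma choose_aux {n m k : ℕ} (h : m + k ≤ n) :
    n.choose m * (n - m).choose k = n.choose k * (n - k).choose m := by
  have h1 := Nat.choose_mul (n := n) (by omega : m ≤ m + k)
  have h2 := Nat.choose_mul (n := n) (by omega : k ≤ m + k)
  simp only [Nat.add_sub_cancel, Nat.add_sub_cancel_left] at h1 h2
  have hs : (m + k).choose m = (m + k).choose k := by
    rw [← Nat.choose_symm (by omega : k ≤ m + k)]; congr 1; omega
  rw [← h1, ← h2, hs]

theorem taylor_coeff_calT (n k : ℕ) (hk : k ≤ n) :
    ∑ m ∈ Finset.range (n - k + 1),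
        (-1 : ℂ) ^ (n - m - k) * (n.choose m : ℂ) * ((n - m).choose k : ℂ) *
          (m : ℂ) ^ m * (1 + (m : ℂ)) ^ (n - m - k) =
      (n.choose k : ℂ) * calT (n - k) ((k : ℂ) - n - 1) := by
  rw [calT, Finset.mul_sum]
  apply Finset.sum_congr rfl
  intro m hm
  rw [Finset.mem_range] at hm
  have hm' : m ≤ n - k := by omega
  have hmk : m + k ≤ n := by omega
  have hcast : ((n - k - m : ℕ) : ℂ) + ((k : ℂ) - n - 1) = -(1 + m) := by
    have : ((n - k - m : ℕ) : ℂ) = (n : ℂ) - k - m := by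
      push_cast [Nat.cast_sub (by omega : m ≤ n - k), Nat.cast_sub hk]; ring
    rw [this]; ring
  have he : n - m - k = n - k - m := by omega
  have hpow : (-(1 + (m : ℂ))) ^ (n - k - m) =
      (-1 : ℂ) ^ (n - k - m) * (1 + (m : ℂ)) ^ (n - k - m) := by rw [neg_pow]
  rw [hcast, hpow, he]
  have hch : (↑(n.choose m) : ℂ) * ↑((n - m).choose k) =
      (↑(n.choose k) : ℂ) * ↑((n - k).choose m) := by
    rw [← Nat.cast_mul, ← Nat.cast_mul, choose_aux hmk]
  push_cast at hch ⊢
  linear_combination ((m:ℂ)^m * (-1)^(n-k-m) * (1+(m:ℂ))^(n-k-m)) * hch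
end

section
/- For every natural number n, the value \mathcal{T}_n(-n-1) equals the n-th subfactorial (derangement number): \mathcal{T}_n(-n-1) = \sum_{k=0}^{n} (-1)^k \frac{n!}{k!}. -/
open Finset

/-- Finite differences: alternating sum of `C(N,m) m^k` vanishes for `k < N`
and equals `N!` for `k = N`. -/
lemma key_diff (N : ℕ) : ∀ k ≤ N,
    ∑ m ∈ Finset.range (N + 1), (-1 : ℂ) ^ (N - m) * (N.choose m : ℂ) * (m : ℂ) ^ k
      = if k = N then (N.factorial : ℂ) else 0 := by
  induction N with
  | zero =>
    intro k hk
    interval_cases k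
    simp
  | succ N ih =>
    intro k hk
    have step1 :
        ∑ m ∈ Finset.range (N + 2), (-1 : ℂ) ^ (N + 1 - m) * ((N + 1).choose m : ℂ) * (m : ℂ) ^ k
          = ∑ m ∈ Finset.range (N + 1),
              (-1 : ℂ) ^ (N - m) * (N.choose m : ℂ) * (((m : ℂ) + 1) ^ k - (m : ℂ) ^ k) := by
      set g : ℕ → ℂ := fun m => (-1 : ℂ) ^ (N + 1 - m) * (N.choose m : ℂ) * (m : ℂ) ^ k with hg
      have hgsum : ∑ m ∈ Finset.range (N + 2), g m
          = (∑ m ∈ Finset.range (N + 1), g (m + 1)) + g 0 := Finset.sum_range_succ' g (N + 1)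
      have hgsum2 : ∑ m ∈ Finset.range (N + 2), g m
          = (∑ m ∈ Finset.range (N + 1), g m) + g (N + 1) := Finset.sum_range_succ g (N + 1)
      have hgtop : g (N + 1) = 0 := by simp [hg, Nat.choose_succ_self]
      have hgneg : ∑ m ∈ Finset.range (N + 1), g m
          = -∑ m ∈ Finset.range (N + 1), (-1 : ℂ) ^ (N - m) * (N.choose m : ℂ) * (m : ℂ) ^ k := by
        rw [← Finset.sum_neg_distrib]
        apply Finset.sum_congr rfl
        intro m hm
        have hm' : m ≤ N := by simpa using Nat.lt_succ_iff.mp (Finset.mem_range.mp hm)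
        have : N + 1 - m = (N - m) + 1 := by omega
        rw [hg]; simp only []
        rw [this, pow_succ]
        ring
      -- now the main sum
      rw [Finset.sum_range_succ' _ (N + 1)]
      have hterm : ∀ m ∈ Finset.range (N + 1),
          (-1 : ℂ) ^ (N + 1 - (m + 1)) * ((N + 1).choose (m + 1) : ℂ) * ((m + 1 : ℕ) : ℂ) ^ k
          = (-1 : ℂ) ^ (N - m) * (N.choose m : ℂ) * ((m : ℂ) + 1) ^ k + g (m + 1) := by
        intro m hm
        have h1 : N + 1 - (m + 1) = N - m := by omega
        have h2 : ((N + 1).choose (m + 1) : ℂ) = (N.choose m : ℂ) + (N.choose (m + 1) : ℂ) := by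
          rw [Nat.choose_succ_succ]; push_cast; ring
        rw [h1, h2, hg]; simp only []
        rw [h1]
        push_cast
        ring
      rw [Finset.sum_congr rfl hterm, Finset.sum_add_distrib]
      have hB : ∑ m ∈ Finset.range (N + 1), g (m + 1)
          = -(∑ m ∈ Finset.range (N + 1), (-1 : ℂ) ^ (N - m) * (N.choose m : ℂ) * (m : ℂ) ^ k)
            - g 0 := by
        have := hgsum.symm.trans hgsum2
        rw [hgtop, add_zero] at this
        rw [← hgneg]
        linear_combination this
      have h0 : (-1 : ℂ) ^ (N + 1 - 0) * ((N + 1).choose 0 : ℂ) * ((0 : ℕ) : ℂ) ^ k = g 0 := by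
        simp [hg]
      rw [hB, h0]
      rw [Finset.sum_congr rfl (fun m _ => mul_sub ((-1 : ℂ) ^ (N - m) * (N.choose m : ℂ))
        (((m : ℂ) + 1) ^ k) ((m : ℂ) ^ k)), Finset.sum_sub_distrib]
      ring
    have step2 : ∀ m : ℕ, ((m : ℂ) + 1) ^ k - (m : ℂ) ^ k
        = ∑ j ∈ Finset.range k, (m : ℂ) ^ j * (k.choose j : ℂ) := by
      intro m
      have := add_pow (m : ℂ) 1 k
      simp only [one_pow, mul_one] at this
      rw [this, Finset.sum_range_succ, Nat.choose_self]
      push_cast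
      ring
    rw [step1]
    calc ∑ m ∈ Finset.range (N + 1),
          (-1 : ℂ) ^ (N - m) * (N.choose m : ℂ) * (((m : ℂ) + 1) ^ k - (m : ℂ) ^ k)
        = ∑ m ∈ Finset.range (N + 1), ∑ j ∈ Finset.range k,
            (k.choose j : ℂ) * ((-1 : ℂ) ^ (N - m) * (N.choose m : ℂ) * (m : ℂ) ^ j) := by
          apply Finset.sum_congr rfl
          intro m _
          rw [step2 m, Finset.mul_sum]
          apply Finset.sum_congr rfl
          intro j _
          ring
      _ = ∑ j ∈ Finset.range k, (k.choose j : ℂ) *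
            ∑ m ∈ Finset.range (N + 1), (-1 : ℂ) ^ (N - m) * (N.choose m : ℂ) * (m : ℂ) ^ j := by
          rw [Finset.sum_comm]
          exact Finset.sum_congr rfl fun j _ => (Finset.mul_sum _ _ _).symm
      _ = ∑ j ∈ Finset.range k, (k.choose j : ℂ) * (if j = N then (N.factorial : ℂ) else 0) := by
          apply Finset.sum_congr rfl
          intro j hj
          have hjk : j < k := Finset.mem_range.mp hj
          rw [ih j (by omega)]
      _ = if k = N + 1 then ((N + 1).factorial : ℂ) else 0 := by
          rcases eq_or_ne k (N + 1) with h | h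
          · subst h
            rw [Finset.sum_eq_single N]
            · simp [Nat.choose_succ_self_right, Nat.factorial_succ]
            · intro j hj hjne; simp [hjne]
            · intro h; simp at h
          · have hkN : k ≤ N := by omega
            rw [if_neg h]
            apply Finset.sum_eq_zero
            intro j hj
            have : j ≠ N := by have := Finset.mem_range.mp hj; omega
            simp [this]

theorem calT_subfactorial (n : ℕ) :
    calT n (-(n : ℂ) - 1) =
      ∑ k ∈ Finset.range (n + 1), (-1 : ℂ) ^ k * ((n.factorial : ℂ) / (k.factorial : ℂ)) := by
  unfold calT
  -- rewrite each term as a double sum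
  have hterm : ∀ m ∈ Finset.range (n + 1),
      (n.choose m : ℂ) * (m : ℂ) ^ m * (((n - m : ℕ) : ℂ) + (-(n : ℂ) - 1)) ^ (n - m)
        = ∑ k ∈ Finset.range (n + 1),
            (-1 : ℂ) ^ (n - m) * (n.choose m : ℂ) * ((n - m).choose k : ℂ) * (m : ℂ) ^ (n - k) := by
    intro m hm
    have hmn : m ≤ n := by have := Finset.mem_range.mp hm; omega
    have hcast : ((n - m : ℕ) : ℂ) = (n : ℂ) - (m : ℂ) := by
      push_cast [Nat.cast_sub hmn]; ring
    have hbase : ((n - m : ℕ) : ℂ) + (-(n : ℂ) - 1) = -((m : ℂ) + 1) := by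
      rw [hcast]; ring
    rw [hbase, neg_pow]
    have hexp : ((m : ℂ) + 1) ^ (n - m)
        = ∑ k ∈ Finset.range (n - m + 1), (m : ℂ) ^ (n - m - k) * ((n - m).choose k : ℂ) := by
      have := add_pow (1 : ℂ) (m : ℂ) (n - m)
      simp only [one_pow, one_mul] at this
      rw [add_comm ((m : ℂ)) 1, this]
    rw [hexp, Finset.mul_sum, Finset.mul_sum]
    rw [← Finset.sum_subset (Finset.range_subset_range.mpr (by omega : n - m + 1 ≤ n + 1))]
    · apply Finset.sum_congr rfl
      intro k hk
      have hk' : k ≤ n - m := by have := Finset.mem_range.mp hk; omega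
      have hpow : (m : ℂ) ^ m * (m : ℂ) ^ (n - m - k) = (m : ℂ) ^ (n - k) := by
        rw [← pow_add]
        congr 1
        omega
      rw [← hpow]; ring
    · intro k hk hknot
      have : n - m < k := by
        have h1 := Finset.mem_range.mp hk
        have h2 : ¬ k < n - m + 1 := fun h => hknot (Finset.mem_range.mpr h)
        omega
      simp [Nat.choose_eq_zero_of_lt this]
  rw [Finset.sum_congr rfl hterm, Finset.sum_comm]
  apply Finset.sum_congr rfl
  intro k hk
  have hkn : k ≤ n := by have := Finset.mem_range.mp hk; omega
  -- restrict inner sum to m ≤ n - k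
  rw [← Finset.sum_subset (Finset.range_subset_range.mpr (by omega : n - k + 1 ≤ n + 1))]
  · have hinner : ∀ m ∈ Finset.range (n - k + 1),
        (-1 : ℂ) ^ (n - m) * (n.choose m : ℂ) * ((n - m).choose k : ℂ) * (m : ℂ) ^ (n - k)
          = ((-1 : ℂ) ^ k * (n.choose k : ℂ)) *
              ((-1 : ℂ) ^ ((n - k) - m) * ((n - k).choose m : ℂ) * (m : ℂ) ^ (n - k)) := by
      intro m hm
      have hm' : m ≤ n - k := by have := Finset.mem_range.mp hm; omega
      have hchoose : (n.choose m) * ((n - m).choose k) = (n.choose k) * ((n - k).choose m) := by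
        have h1 : n.choose m = n.choose (n - m) := (Nat.choose_symm (by omega)).symm
        have h2 := Nat.choose_mul (n := n) (show k ≤ n - m by omega)
        have h3 : (n - m) - k = (n - k) - m := by omega
        rw [h1, h2, h3, Nat.choose_symm (show m ≤ n - k by omega)]
      have hsign : (-1 : ℂ) ^ (n - m) = (-1 : ℂ) ^ k * (-1 : ℂ) ^ ((n - k) - m) := by
        rw [← pow_add]
        congr 1
        omega
      rw [hsign]
      have : ((n.choose m : ℕ) : ℂ) * (((n - m).choose k : ℕ) : ℂ)
          = ((n.choose k : ℕ) : ℂ) * (((n - k).choose m : ℕ) : ℂ) := by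
        rw [← Nat.cast_mul, ← Nat.cast_mul, hchoose]
      calc (-1 : ℂ) ^ k * (-1 : ℂ) ^ ((n - k) - m) * (n.choose m : ℂ) * ((n - m).choose k : ℂ)
            * (m : ℂ) ^ (n - k)
          = (-1 : ℂ) ^ k * (-1 : ℂ) ^ ((n - k) - m)
              * ((n.choose m : ℂ) * ((n - m).choose k : ℂ)) * (m : ℂ) ^ (n - k) := by ring
        _ = (-1 : ℂ) ^ k * (-1 : ℂ) ^ ((n - k) - m)
              * ((n.choose k : ℂ) * ((n - k).choose m : ℂ)) * (m : ℂ) ^ (n - k) := by rw [this]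
        _ = ((-1 : ℂ) ^ k * (n.choose k : ℂ)) *
              ((-1 : ℂ) ^ ((n - k) - m) * ((n - k).choose m : ℂ) * (m : ℂ) ^ (n - k)) := by ring
    rw [Finset.sum_congr rfl hinner, ← Finset.mul_sum]
    have hkd := key_diff (n - k) (n - k) le_rfl
    rw [if_pos rfl] at hkd
    rw [hkd]
    have hfac : (n.choose k : ℂ) * ((n - k).factorial : ℂ) = (n.factorial : ℂ) / (k.factorial : ℂ) := by
      have h := Nat.choose_mul_factorial_mul_factorial hkn
      have hk0 : (k.factorial : ℂ) ≠ 0 := Nat.cast_ne_zero.mpr (Nat.factorial_ne_zero k)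
      field_simp
      calc (n.choose k : ℂ) * ((n - k).factorial : ℂ) * (k.factorial : ℂ)
          = ((n.choose k * k.factorial * (n - k).factorial : ℕ) : ℂ) := by push_cast; ring
        _ = (n.factorial : ℂ) := by rw [h]
    rw [mul_assoc, hfac]
  · intro m hm hmnot
    have : n - m < k := by
      have h1 := Finset.mem_range.mp hm
      have h2 : ¬ m < n - k + 1 := fun h => hmnot (Finset.mem_range.mpr h)
      omega
    simp [Nat.choose_eq_zero_of_lt this]
end
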